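/- In the sequential scheduling game on m unrelated machines where players are simple-minded, every simple-minded equilibrium σ has makespan at most m·OPT; in particular the sequential price of anarchy for simple-minded players is at most m. -/
import Mathlib


/-!
Sequential scheduling game on `m` unrelated machines with simple-minded players.
Machines are indexed by `Fin m`, jobs are `1, …, n`, and `p i j` is the processing
time of job `j` on machine `i`.
-/

/-- `mload p σ i ℓ`: load of machine `i` after the first `ℓ` jobs under schedule `σ`. -/
def mload {m : ℕ} (p : Fin m → ℕ → ℝ) (σ : ℕ → Fin m) (i : Fin m) (ℓ : ℕ) : ℝ :=
  ∑ j ∈ Finset.Icc 1 ℓ, if σ j = i then p i j else 0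

/-- `μ` is a selection assigning to each job `j ∈ {1, …, n}` a machine on which its
processing time is minimal (so that `p (μ j) j = p_j`). -/
def MinSel {m : ℕ} (n : ℕ) (p : Fin m → ℕ → ℝ) (μ : ℕ → Fin m) : Prop :=
  ∀ j, 1 ≤ j → j ≤ n → ∀ i, p (μ j) j ≤ p i j

/-- Anticipated cost, for a simple-minded job `j`, of choosing machine `i`:
the current load of machine `i`, plus `p i j`, plus the minimum processing times of
all later jobs that `j` assumes (via the selection `μ`) will choose machine `i`. -/
def smCost {m : ℕ} (n : ℕ) (p : Fin m → ℕ → ℝ) (μ σ : ℕ → Fin m) (j : ℕ) (i : Fin m) : ℝ :=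
  mload p σ i (j - 1) + p i j + ∑ j' ∈ Finset.Icc (j + 1) n, if μ j' = i then p (μ j') j' else 0

/-- `σ` is a simple-minded equilibrium: every job `j ∈ {1, …, n}` chooses a machine
minimizing its anticipated cost. -/
def SMEq {m : ℕ} (n : ℕ) (p : Fin m → ℕ → ℝ) (μ σ : ℕ → Fin m) : Prop :=
  ∀ j, 1 ≤ j → j ≤ n → ∀ i, smCost n p μ σ j (σ j) ≤ smCost n p μ σ j i

/-- Makespan of an arbitrary schedule `τ` of jobs `1, …, n` on `m` machines. -/
noncomputable def makespanM {m : ℕ} (n : ℕ) (p : Fin m → ℕ → ℝ) (τ : ℕ → Fin m) : ℝ :=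
  ⨆ i, mload p τ i n

/-- Optimal (minimum) makespan over all schedules of jobs `1, …, n`. -/
noncomputable def OPTm {m : ℕ} (n : ℕ) (p : Fin m → ℕ → ℝ) : ℝ :=
  sInf {x | ∃ τ : ℕ → Fin m, x = makespanM n p τ}

/-- On `m` unrelated machines with simple-minded players, every
simple-minded equilibrium has makespan at most `m · OPT`; in particular the
sequential price of anarchy for simple-minded players is at most `m`. -/
theorem spoa_simpleMinded_le (m n : ℕ) (hm : 0 < m)
    (p : Fin m → ℕ → ℝ) (hp : ∀ i j, 0 ≤ p i j)
    (μ σ : ℕ → Fin m) (hμ : MinSel n p μ) (hσ : SMEq n p μ σ) :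
    makespanM n p σ ≤ (m : ℝ) * OPTm n p := by
  haveI : Nonempty (Fin m) := Fin.pos_iff_nonempty.mp hm
  set S : ℝ := ∑ j ∈ Finset.Icc 1 n, p (μ j) j with hS
  -- future anticipated load
  set F : Fin m → ℕ → ℝ :=
    fun i ℓ => ∑ j' ∈ Finset.Icc (ℓ + 1) n, if μ j' = i then p (μ j') j' else 0 with hF
  have hFnonneg : ∀ i ℓ, 0 ≤ F i ℓ := fun i ℓ =>
    Finset.sum_nonneg fun j _ => by split_ifs <;> simp [hp]
  -- key invariant
  have key : ∀ ℓ, ℓ ≤ n → ∀ i, mload p σ i ℓ + F i ℓ ≤ S := by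
    intro ℓ
    induction ℓ with
    | zero =>
      intro _ i
      have h1 : mload p σ i 0 = 0 := by simp [mload]
      rw [h1, zero_add]
      refine Finset.sum_le_sum fun j _ => ?_
      split <;> simp [hp]
    | succ ℓ ih =>
      intro hℓn i
      have hℓ : ℓ ≤ n := by omega
      have ihS := ih hℓ
      -- split the load sum at the top
      have hload : ∀ k : Fin m, mload p σ k (ℓ + 1)
          = mload p σ k ℓ + (if σ (ℓ + 1) = k then p k (ℓ + 1) else 0) := by
        intro k
        unfold mload
        rw [Finset.sum_Icc_succ_top (by omega : 1 ≤ ℓ + 1)]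
      -- split F at the bottom: F k ℓ = term (ℓ+1) + F k (ℓ+1)
      have hFsplit : ∀ k : Fin m,
          F k ℓ = (if μ (ℓ + 1) = k then p (μ (ℓ + 1)) (ℓ + 1) else 0) + F k (ℓ + 1) := by
        intro k
        have hins : Finset.Icc (ℓ + 1) n = insert (ℓ + 1) (Finset.Icc (ℓ + 2) n) := by
          ext x; simp [Finset.mem_Icc]; omega
        have hnm : ℓ + 1 ∉ Finset.Icc (ℓ + 2) n := by simp
        simp only [hF, hins, Finset.sum_insert hnm]
      by_cases hcase : σ (ℓ + 1) = i
      · -- the chosen machine: use the equilibrium condition against μ (ℓ+1)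
        subst hcase
        have heq := hσ (ℓ + 1) (by omega) hℓn (μ (ℓ + 1))
        have hc1 : smCost n p μ σ (ℓ + 1) (σ (ℓ + 1))
            = mload p σ (σ (ℓ + 1)) (ℓ + 1) + F (σ (ℓ + 1)) (ℓ + 1) := by
          unfold smCost
          rw [hload (σ (ℓ + 1)), if_pos rfl]
          simp only [hF, Nat.add_sub_cancel]
        have hc2 : smCost n p μ σ (ℓ + 1) (μ (ℓ + 1))
            = mload p σ (μ (ℓ + 1)) ℓ + F (μ (ℓ + 1)) ℓ := by
          unfold smCost
          rw [hFsplit (μ (ℓ + 1)), if_pos rfl]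
          simp only [hF, Nat.add_sub_cancel]
          ring
        calc mload p σ (σ (ℓ + 1)) (ℓ + 1) + F (σ (ℓ + 1)) (ℓ + 1)
            = smCost n p μ σ (ℓ + 1) (σ (ℓ + 1)) := hc1.symm
          _ ≤ smCost n p μ σ (ℓ + 1) (μ (ℓ + 1)) := heq
          _ = mload p σ (μ (ℓ + 1)) ℓ + F (μ (ℓ + 1)) ℓ := hc2
          _ ≤ S := ihS _
      · -- other machines: nothing increases
        have h1 : mload p σ i (ℓ + 1) = mload p σ i ℓ := by
          rw [hload i, if_neg hcase, add_zero]
        have h2 : F i (ℓ + 1) ≤ F i ℓ := by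
          rw [hFsplit i]
          have : 0 ≤ (if μ (ℓ + 1) = i then p (μ (ℓ + 1)) (ℓ + 1) else 0) := by split_ifs <;> simp [hp]
          linarith
        calc mload p σ i (ℓ + 1) + F i (ℓ + 1) ≤ mload p σ i ℓ + F i ℓ := by
              rw [h1]; linarith
          _ ≤ S := ihS i
  -- the makespan of σ is at most S
  have hmsS : makespanM n p σ ≤ S := by
    refine ciSup_le fun i => ?_
    have hFn : F i n = 0 := by
      simp [hF, Finset.Icc_eq_empty (by omega : ¬ n + 1 ≤ n)]
    have := key n le_rfl i
    rw [hFn, add_zero] at this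
    exact this
  -- S ≤ m * makespan of any schedule
  have hSle : ∀ τ : ℕ → Fin m, S ≤ (m : ℝ) * makespanM n p τ := by
    intro τ
    have h1 : S ≤ ∑ j ∈ Finset.Icc 1 n, p (τ j) j := by
      refine Finset.sum_le_sum fun j hj => ?_
      rw [Finset.mem_Icc] at hj
      exact hμ j hj.1 hj.2 (τ j)
    have h2 : ∑ j ∈ Finset.Icc 1 n, p (τ j) j = ∑ i : Fin m, mload p τ i n := by
      unfold mload
      rw [Finset.sum_comm]
      refine Finset.sum_congr rfl fun j _ => ?_
      simp
    have h3 : ∀ i : Fin m, mload p τ i n ≤ makespanM n p τ := fun i => by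
      unfold makespanM
      exact le_ciSup (f := fun i => mload p τ i n) (Set.finite_range _).bddAbove i
    calc S ≤ ∑ j ∈ Finset.Icc 1 n, p (τ j) j := h1
      _ = ∑ i : Fin m, mload p τ i n := h2
      _ ≤ ∑ _i : Fin m, makespanM n p τ := Finset.sum_le_sum fun i _ => h3 i
      _ = (m : ℝ) * makespanM n p τ := by simp [Finset.sum_const, mul_comm]
  -- hence S ≤ m * OPT
  have hOPT : S ≤ (m : ℝ) * OPTm n p := by
    have hmpos : (0 : ℝ) < m := by exact_mod_cast hm
    have hlb : S / m ≤ OPTm n p := by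
      refine le_csInf ⟨makespanM n p (fun _ => Classical.arbitrary (Fin m)), _, rfl⟩ ?_
      rintro x ⟨τ, rfl⟩
      rw [div_le_iff₀ hmpos, mul_comm]
      exact hSle τ
    calc S = (m : ℝ) * (S / m) := by field_simp
      _ ≤ (m : ℝ) * OPTm n p := by
          exact mul_le_mul_of_nonneg_left hlb (le_of_lt hmpos)
  linarith
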